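/- arXiv:1201.5088 — 3 statements merged into one kernel-verified Lean document; each statement's English description precedes it below -/
import Mathlib

section
/- Let s, t ∈ ℂ with s ≠ 0 and |t| < 1. Then ∑_{N=1}^{∞} (t^N/N!) · (∑_{k=0}^{N−1} a_k(N)·s^k) = (exp(−s·log(1−t)) − 1)/s, where log denotes the principal branch of the complex logarithm. -/
open Finset

/-- The coefficients `a_k(N) = (N!/(k+1)!) · ∑_{l₁+⋯+l_{k+1}=N, lᵢ ≥ 1} 1/(l₁⋯l_{k+1})`
for `0 ≤ k ≤ N-1`, as complex numbers. -/
noncomputable def aCoeff (N k : ℕ) : ℂ :=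
  ((N.factorial : ℂ) / ((k + 1).factorial : ℂ)) *
    ∑ l ∈ (Finset.Nat.antidiagonalTuple (k + 1) N).filter (fun l => ∀ i, 0 < l i),
      (∏ i, (l i : ℂ))⁻¹


/-- The real-valued coefficient sums. -/
noncomputable def cSum (m N : ℕ) : ℝ :=
  ∑ l ∈ (Finset.Nat.antidiagonalTuple m N).filter (fun l => ∀ i, 0 < l i),
    (∏ i, (l i : ℝ))⁻¹

lemma cSum_nonneg (m N : ℕ) : 0 ≤ cSum m N :=
  Finset.sum_nonneg fun _ _ => inv_nonneg.mpr (Finset.prod_nonneg fun _ _ => Nat.cast_nonneg _)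

lemma cSum_eq_zero {m N : ℕ} (h : N < m) : cSum m N = 0 := by
  rw [cSum, Finset.filter_eq_empty_iff.mpr, Finset.sum_empty]
  intro l hl hpos
  have h1 : ∑ i, l i = N := Finset.Nat.mem_antidiagonalTuple.mp hl
  have h2 : (m : ℕ) ≤ ∑ i : Fin m, l i := by
    calc m = ∑ _i : Fin m, 1 := by simp
      _ ≤ ∑ i, l i := Finset.sum_le_sum fun i _ => hpos i
  omega

lemma aCoeff_eq (N k : ℕ) :
    aCoeff N k = ((N.factorial : ℂ) / ((k + 1).factorial : ℂ)) * ((cSum (k+1) N : ℝ) : ℂ) := by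
  rw [aCoeff, cSum]
  congr 1
  push_cast
  rfl


/-- Product of a summable family over tuples. -/
lemma tupleProd_hasSum {R : Type*} [NormedField R] [CompleteSpace R] (B : ℕ → R)
    (hB : Summable fun n => ‖B n‖) (m : ℕ) :
    Summable (fun l : Fin m → ℕ => ‖∏ i, B (l i)‖) ∧
      HasSum (fun l : Fin m → ℕ => ∏ i, B (l i)) ((∑' n, B n) ^ m) := by
  induction m with
  | zero =>
    have huniq : ∀ l : Fin 0 → ℕ, l = (fun i => i.elim0) := fun l => funext fun i => i.elim0
    constructor
    · have := hasSum_single (f := fun l : Fin 0 → ℕ => ‖∏ i, B (l i)‖) (fun i => i.elim0)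
        (fun b hb => absurd (huniq b) hb)
      exact this.summable
    · have := hasSum_single (f := fun l : Fin 0 → ℕ => ∏ i, B (l i)) (fun i => i.elim0)
        (fun b hb => absurd (huniq b) hb)
      simpa using this
  | succ m ih =>
    obtain ⟨ihS, ihH⟩ := ih
    have key : ∀ p : ℕ × (Fin m → ℕ),
        (∏ i, B ((Fin.cons p.1 p.2 : Fin (m+1) → ℕ) i)) = B p.1 * ∏ i, B (p.2 i) := by
      intro p
      have h1 : B ∘ (Fin.cons p.1 p.2 : Fin (m+1) → ℕ) = Fin.cons (B p.1) (B ∘ p.2) := Fin.comp_cons B p.1 p.2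
      calc (∏ i, B ((Fin.cons p.1 p.2 : Fin (m+1) → ℕ) i)) = ∏ i, (Fin.cons (B p.1) (B ∘ p.2) : Fin (m+1) → R) i := by
            rw [← h1]; rfl
        _ = B p.1 * ∏ i, B (p.2 i) := by rw [Fin.prod_cons]; rfl
    constructor
    · rw [← (Fin.consEquiv fun _ : Fin (m+1) => ℕ).summable_iff]
      have h2 : ((fun l : Fin (m+1) → ℕ => ‖∏ i, B (l i)‖) ∘ (Fin.consEquiv fun _ : Fin (m+1) => ℕ))
          = fun p : ℕ × (Fin m → ℕ) => ‖B p.1 * ∏ i, B (p.2 i)‖ := by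
        funext p
        simp only [Function.comp_apply, Fin.consEquiv_apply, key p]
      rw [h2]
      exact Summable.mul_norm (f := B) (g := fun l : Fin m → ℕ => ∏ i, B (l i)) hB ihS
    · rw [← (Fin.consEquiv fun _ : Fin (m+1) => ℕ).hasSum_iff]
      have h2 : ((fun l : Fin (m+1) → ℕ => ∏ i, B (l i)) ∘ (Fin.consEquiv fun _ : Fin (m+1) => ℕ))
          = fun p : ℕ × (Fin m → ℕ) => B p.1 * ∏ i, B (p.2 i) := by
        funext p
        simp only [Function.comp_apply, Fin.consEquiv_apply, key p]
      rw [h2]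
      have hsum : Summable (fun p : ℕ × (Fin m → ℕ) => B p.1 * ∏ i, B (p.2 i)) :=
        summable_mul_of_summable_norm (f := B) (g := fun l : Fin m → ℕ => ∏ i, B (l i)) hB ihS
      have hval : ∑' (p : ℕ × (Fin m → ℕ)), B p.1 * ∏ i, B (p.2 i)
          = (∑' n, B n) ^ (m + 1) := by
        rw [← tsum_mul_tsum_of_summable_norm (f := B) (g := fun l : Fin m → ℕ => ∏ i, B (l i)) hB ihS, ihH.tsum_eq, pow_succ, mul_comm]
      exact hval ▸ hsum.hasSum

/-- Regroup a sum over tuples by the total. -/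
lemma hasSum_groupBySum {E : Type*} [NormedAddCommGroup E] {m : ℕ}
    {F : (Fin m → ℕ) → E} {S : E} (h : HasSum F S) :
    HasSum (fun N => ∑ l ∈ Finset.Nat.antidiagonalTuple m N, F l) S := by
  classical
  have h1 : HasSum (fun x : Σ N : ℕ, {l : Fin m → ℕ // (∑ i, l i) = N} => F x.2) S :=
    (Equiv.sigmaFiberEquiv fun l : Fin m → ℕ => ∑ i, l i).hasSum_iff.mpr h
  refine HasSum.sigma h1 fun N => ?_
  have h2 := (Finset.Nat.antidiagonalTuple m N).hasSum F
  exact (Equiv.subtypeEquivRight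
    (fun l => Finset.Nat.mem_antidiagonalTuple)).hasSum_iff.mp h2

lemma eval_C (t : ℂ) (m N : ℕ) :
    ∑ l ∈ Finset.Nat.antidiagonalTuple m N, ∏ i, (t ^ (l i) / (l i : ℂ)) =
      t ^ N * ((cSum m N : ℝ) : ℂ) := by
  classical
  rw [← Finset.sum_filter_of_ne (p := fun l : Fin m → ℕ => ∀ i, 0 < l i)
    (fun l _ hne => by
      intro i
      by_contra hi
      push_neg at hi
      interval_cases h : l i
      exact hne (Finset.prod_eq_zero (Finset.mem_univ i) (by rw [h]; simp)))]
  rw [cSum, Complex.ofReal_sum, Finset.mul_sum]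
  apply Finset.sum_congr rfl
  intro l hl
  obtain ⟨hl1, _⟩ := Finset.mem_filter.mp hl
  have hsum : ∑ i, l i = N := Finset.Nat.mem_antidiagonalTuple.mp hl1
  calc (∏ i, (t ^ (l i) / (l i : ℂ)))
      = (∏ i, t ^ l i) * ∏ i, ((l i : ℂ))⁻¹ := by
        rw [← Finset.prod_mul_distrib]
        exact Finset.prod_congr rfl fun i _ => div_eq_mul_inv _ _
    _ = t ^ N * ((∏ i, ((l i : ℝ)))⁻¹ : ℝ) := by
        rw [Finset.prod_pow_eq_pow_sum, hsum]
        congr 1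
        rw [← Finset.prod_inv_distrib]
        push_cast
        rfl

lemma eval_R (t : ℂ) (m N : ℕ) :
    ∑ l ∈ Finset.Nat.antidiagonalTuple m N, ∏ i, ‖t ^ (l i) / (l i : ℂ)‖ =
      ‖t‖ ^ N * cSum m N := by
  classical
  have hnorm : ∀ n : ℕ, ‖t ^ n / (n : ℂ)‖ = ‖t‖ ^ n / (n : ℝ) := by
    intro n
    rw [norm_div, norm_pow]
    norm_num
  rw [← Finset.sum_filter_of_ne (p := fun l : Fin m → ℕ => ∀ i, 0 < l i)
    (fun l _ hne => by
      intro i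
      by_contra hi
      push_neg at hi
      interval_cases h : l i
      refine hne (Finset.prod_eq_zero (Finset.mem_univ i) ?_)
      rw [h, hnorm]; simp)]
  rw [cSum, Finset.mul_sum]
  apply Finset.sum_congr rfl
  intro l hl
  obtain ⟨hl1, _⟩ := Finset.mem_filter.mp hl
  have hsum : ∑ i, l i = N := Finset.Nat.mem_antidiagonalTuple.mp hl1
  calc (∏ i, ‖t ^ (l i) / (l i : ℂ)‖)
      = (∏ i, ‖t‖ ^ l i) * ∏ i, ((l i : ℝ))⁻¹ := by
        rw [← Finset.prod_mul_distrib]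
        exact Finset.prod_congr rfl fun i _ => by rw [hnorm, div_eq_mul_inv]
    _ = ‖t‖ ^ N * ((∏ i, ((l i : ℝ)))⁻¹) := by
        rw [Finset.prod_pow_eq_pow_sum, hsum, Finset.prod_inv_distrib]

set_option maxHeartbeats 1000000 in
/-- The generating function `g(t,s) = ∑_{N ≥ 1} (t^N/N!) ∑_{k=0}^{N-1} a_k(N) s^k`
equals `(e^{-s·log(1-t)} - 1)/s` for `|t| < 1`, `s ≠ 0`. -/
theorem aCoeff_generating_function (s t : ℂ) (hs : s ≠ 0) (ht : ‖t‖ < 1) :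
    HasSum
      (fun N : ℕ =>
        (t ^ (N + 1) / ((N + 1).factorial : ℂ)) *
          ∑ k ∈ Finset.range (N + 1), aCoeff (N + 1) k * s ^ k)
      ((Complex.exp (-s * Complex.log (1 - t)) - 1) / s) := by
  classical
  have htn : ‖t‖ < 1 := by exact ht
  have hA : Summable fun n : ℕ => ‖t ^ n / (n : ℂ)‖ := by
    refine Summable.of_nonneg_of_le (fun n => norm_nonneg _) (fun n => ?_)
      (summable_geometric_of_lt_one (norm_nonneg t) htn)
    rw [norm_div, norm_pow]
    rcases Nat.eq_zero_or_pos n with rfl | hn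
    · simp
    · have h1 : (1 : ℝ) ≤ ‖(n : ℂ)‖ := by
        rw [Complex.norm_natCast]; exact_mod_cast hn
      exact div_le_self (pow_nonneg (norm_nonneg t) n) h1
  set L : ℂ := -Complex.log (1 - t) with hL_def
  have hL : HasSum (fun n : ℕ => t ^ n / (n : ℂ)) L := Complex.hasSum_taylorSeries_neg_log htn
  set Λ : ℝ := ∑' n : ℕ, ‖t ^ n / (n : ℂ)‖ with hΛ_def
  have hΛ0 : 0 ≤ Λ := tsum_nonneg fun n => norm_nonneg _
  have hC : ∀ k : ℕ, HasSum (fun N => t ^ N * ((cSum (k+1) N : ℝ) : ℂ)) (L ^ (k+1)) := by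
    intro k
    have h1 := (tupleProd_hasSum (fun n => t ^ n / (n : ℂ)) hA (k+1)).2
    rw [hL.tsum_eq] at h1
    have h2 := hasSum_groupBySum h1
    have h3 : (fun N => ∑ l ∈ Finset.Nat.antidiagonalTuple (k+1) N, ∏ i, (t ^ (l i) / (l i : ℂ)))
        = fun N => t ^ N * ((cSum (k+1) N : ℝ) : ℂ) := funext fun N => eval_C t (k+1) N
    rwa [h3] at h2
  have hAR : Summable fun n : ℕ => ‖‖t ^ n / (n : ℂ)‖‖ := by simpa using hA
  have hR : ∀ k : ℕ, HasSum (fun N => ‖t‖ ^ N * cSum (k+1) N) (Λ ^ (k+1)) := by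
    intro k
    have h1 := (tupleProd_hasSum (fun n => ‖t ^ n / (n : ℂ)‖) hAR (k+1)).2
    rw [← hΛ_def] at h1
    have h2 := hasSum_groupBySum h1
    have h3 : (fun N => ∑ l ∈ Finset.Nat.antidiagonalTuple (k+1) N, ∏ i, ‖t ^ (l i) / (l i : ℂ)‖)
        = fun N => ‖t‖ ^ N * cSum (k+1) N := funext fun N => eval_R t (k+1) N
    rwa [h3] at h2
  set g : ℕ × ℕ → ℂ := fun p => (s ^ p.1 / ((p.1 + 1).factorial : ℂ)) *
      (t ^ p.2 * ((cSum (p.1+1) p.2 : ℝ) : ℂ)) with hg_def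
  have hgk : ∀ k, HasSum (fun N => g (k, N)) ((s ^ k / ((k+1).factorial : ℂ)) * L ^ (k+1)) :=
    fun k => (hC k).mul_left _
  have hgnorm : ∀ k N : ℕ, ‖g (k, N)‖ =
      (‖s‖ ^ k / ((k+1).factorial : ℝ)) * (‖t‖ ^ N * cSum (k+1) N) := by
    intro k N
    simp only [hg_def, norm_mul, norm_div, norm_pow, Complex.norm_natCast, Complex.norm_real,
      Real.norm_eq_abs, abs_of_nonneg (cSum_nonneg _ _)]
  have hnormsum : Summable fun p : ℕ × ℕ => ‖g p‖ := by
    refine (summable_prod_of_nonneg fun p => norm_nonneg _).mpr ⟨fun k => ?_, ?_⟩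
    · exact (((hR k).mul_left (‖s‖ ^ k / ((k+1).factorial : ℝ))).summable).congr
        fun N => (hgnorm k N).symm
    · have hts : (fun k : ℕ => ∑' N, ‖g (k, N)‖)
          = fun k : ℕ => (‖s‖ ^ k / ((k+1).factorial : ℝ)) * Λ ^ (k+1) := by
        funext k
        rw [tsum_congr (fun N => hgnorm k N)]
        exact ((hR k).mul_left _).tsum_eq
      rw [hts]
      refine Summable.of_nonneg_of_le (fun k => ?_) (fun k => ?_)
        ((Real.summable_pow_div_factorial (‖s‖ * Λ)).mul_left Λ)
      · exact mul_nonneg (div_nonneg (pow_nonneg (norm_nonneg s) _) (by positivity))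
          (pow_nonneg hΛ0 _)
      · have h1 : ‖s‖ ^ k / ((k+1).factorial : ℝ) * Λ ^ (k+1)
            ≤ ‖s‖ ^ k / (k.factorial : ℝ) * Λ ^ (k+1) := by
          gcongr
          exact Nat.le_succ k
        calc ‖s‖ ^ k / ((k+1).factorial : ℝ) * Λ ^ (k+1)
            ≤ ‖s‖ ^ k / (k.factorial : ℝ) * Λ ^ (k+1) := h1
          _ = Λ * ((‖s‖ * Λ) ^ k / (k.factorial : ℝ)) := by rw [mul_pow, pow_succ]; ring
  have hgsum : Summable g := hnormsum.of_norm
  have hexp0 : HasSum (fun n : ℕ => (s * L) ^ n / (n.factorial : ℂ)) (Complex.exp (s * L)) := by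
    rw [Complex.exp_eq_exp_ℂ]
    exact NormedSpace.expSeries_div_hasSum_exp (s * L)
  have hexp1 : HasSum (fun k : ℕ => (s * L) ^ (k+1) / ((k+1).factorial : ℂ))
      (Complex.exp (s * L) - 1) := by
    have h := (hasSum_nat_add_iff' (f := fun n : ℕ => (s * L) ^ n / (n.factorial : ℂ)) 1).mpr hexp0
    simpa using h
  have hG : HasSum (fun k : ℕ => (s ^ k / ((k+1).factorial : ℂ)) * L ^ (k+1))
      ((Complex.exp (s * L) - 1) / s) := by
    have h2 := hexp1.div_const s
    have h3 : (fun k : ℕ => (s * L) ^ (k+1) / ((k+1).factorial : ℂ) / s)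
        = fun k : ℕ => (s ^ k / ((k+1).factorial : ℂ)) * L ^ (k+1) := by
      funext k
      have hfac : ((k+1).factorial : ℂ) ≠ 0 := Nat.cast_ne_zero.mpr (Nat.factorial_ne_zero _)
      rw [mul_pow]
      field_simp
      ring
    rwa [h3] at h2
  have hgtot : HasSum g ((Complex.exp (s * L) - 1) / s) := by
    have h1 : ∑' p, g p = ∑' k, ∑' N, g (k, N) :=
      Summable.tsum_prod' hgsum fun k => (hgk k).summable
    have h2 : ∑' k, ∑' N, g (k, N) = (Complex.exp (s * L) - 1) / s := by
      rw [tsum_congr fun k => (hgk k).tsum_eq]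
      exact hG.tsum_eq
    have h0 := hgsum.hasSum
    rwa [h1, h2] at h0
  have hswap := ((Equiv.prodComm ℕ ℕ).hasSum_iff (f := g)).mpr hgtot
  have hfib : ∀ N : ℕ, HasSum (fun k => g (k, N)) (∑ k ∈ Finset.range N, g (k, N)) := by
    intro N
    apply hasSum_sum_of_ne_finset_zero
    intro k hk
    have hc0 : cSum (k+1) N = 0 := cSum_eq_zero (by simp only [Finset.mem_range] at hk; omega)
    simp [hg_def, hc0]
  have hmain := HasSum.prod_fiberwise hswap hfib
  have hshift := (hasSum_nat_add_iff'
    (f := fun N => ∑ k ∈ Finset.range N, g (k, N)) 1).mpr hmain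
  simp only [Finset.range_one, Finset.sum_singleton, Finset.range_zero, Finset.sum_empty,
    sub_zero] at hshift
  have hfin : (fun N : ℕ => ∑ k ∈ Finset.range (N+1), g (k, N+1))
      = fun N : ℕ => (t ^ (N + 1) / ((N + 1).factorial : ℂ)) *
          ∑ k ∈ Finset.range (N + 1), aCoeff (N + 1) k * s ^ k := by
    funext N
    rw [Finset.mul_sum]
    apply Finset.sum_congr rfl
    intro k _
    have hfac : ((N+1).factorial : ℂ) ≠ 0 := Nat.cast_ne_zero.mpr (Nat.factorial_ne_zero _)
    have hfac2 : ((k+1).factorial : ℂ) ≠ 0 := Nat.cast_ne_zero.mpr (Nat.factorial_ne_zero _)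
    rw [aCoeff_eq]
    simp only [hg_def]
    field_simp
  rw [hfin] at hshift
  have hval : s * L = -s * Complex.log (1 - t) := by rw [hL_def]; ring
  rwa [hval] at hshift
end

section
/- Let u ∈ ℂ with u ≠ 1. Then there exists r > 0 such that for every t ∈ ℂ with |t| < r, the series ∑_{n=0}^{∞} H_n(u)·t^n/n! converges and equals (1−u)/(exp t − u). -/
open Finset

/-- The Frobenius–Euler numbers `H_n(u)`, defined by `H_0(u) = 1` and the recurrence
`∑_{l=0}^{n} C(n,l)·H_l(u) = u·H_n(u)` for `n ≥ 1`, solved for `H_n(u)`. -/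
noncomputable def FE (u : ℂ) : ℕ → ℂ
  | 0 => 1
  | n + 1 => (u - 1)⁻¹ * ∑ l : Fin (n + 1), ((n + 1).choose (l : ℕ) : ℂ) * FE u l

lemma FE_rec (u : ℂ) (hu : u ≠ 1) (n : ℕ) :
    ∑ l ∈ range (n + 2), ((n + 1).choose l : ℂ) * FE u l = u * FE u (n + 1) := by
  have hu1 : u - 1 ≠ 0 := sub_ne_zero.mpr hu
  have h1 : FE u (n+1) = (u - 1)⁻¹ * ∑ l ∈ range (n + 1), ((n + 1).choose l : ℂ) * FE u l := by
    rw [FE, Fin.sum_univ_eq_sum_range (fun l => ((n + 1).choose l : ℂ) * FE u l) (n + 1)]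
  have h2 : ∑ l ∈ range (n + 1), ((n + 1).choose l : ℂ) * FE u l = (u - 1) * FE u (n+1) := by
    rw [h1]; field_simp
  rw [Finset.sum_range_succ, Nat.choose_self, h2]; push_cast; ring

lemma FE_rec' (u : ℂ) (hu : u ≠ 1) (n : ℕ) :
    ∑ l ∈ range (n + 2), (FE u l / (l.factorial : ℂ)) * (((n + 1 - l).factorial : ℂ))⁻¹
      = u * (FE u (n + 1) / (((n + 1).factorial : ℂ))) := by
  have h : ∑ l ∈ range (n + 2), (FE u l / (l.factorial : ℂ)) * (((n + 1 - l).factorial : ℂ))⁻¹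
      = (∑ l ∈ range (n + 2), ((n + 1).choose l : ℂ) * FE u l) / (((n+1).factorial : ℂ)) := by
    rw [Finset.sum_div]
    refine Finset.sum_congr rfl fun l hl => ?_
    have hl' : l ≤ n + 1 := Nat.lt_succ_iff.mp (mem_range.mp hl)
    rw [Nat.cast_choose ℂ hl']
    have f1 : ((l.factorial : ℂ)) ≠ 0 := Nat.cast_ne_zero.mpr l.factorial_ne_zero
    have f2 : (((n+1-l).factorial : ℂ)) ≠ 0 := Nat.cast_ne_zero.mpr (n+1-l).factorial_ne_zero
    have f3 : (((n+1).factorial : ℂ)) ≠ 0 := Nat.cast_ne_zero.mpr (n+1).factorial_ne_zero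
    field_simp
  rw [h, FE_rec u hu n, mul_div_assoc]

lemma two_pow_le_fact (j : ℕ) : (2:ℝ)^j ≤ ((j+1).factorial : ℝ) := by
  induction j with
  | zero => norm_num
  | succ j ih =>
      have : ((j+2).factorial : ℝ) = (j+2) * ((j+1).factorial : ℝ) := by
        rw [Nat.factorial_succ]; push_cast; ring
      rw [pow_succ]
      have hpos : (0:ℝ) < ((j+1).factorial : ℝ) := by positivity
      rw [this]
      nlinarith

lemma FE_bound (u : ℂ) (hu : u ≠ 1) :
    ∃ K : ℝ, 1 ≤ K ∧ ∀ n, ‖FE u n / (n.factorial : ℂ)‖ ≤ K ^ n := by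
  set c : ℝ := ‖u - 1‖⁻¹ with hc
  have hcpos : 0 ≤ c := inv_nonneg.mpr (norm_nonneg _)
  refine ⟨max 1 (2 * c), le_max_left _ _, ?_⟩
  set K := max 1 (2 * c) with hKdef
  have hK1 : 1 ≤ K := le_max_left _ _
  intro n
  induction n using Nat.strong_induction_on with
  | _ n ih =>
    match n with
    | 0 => simp [FE]
    | (m + 1) =>
      -- a_{m+1} = (u-1)⁻¹ * ∑_{l ∈ range (m+1)} a_l / (m+1-l)!
      have key := FE_rec' u hu m
      rw [Finset.sum_range_succ] at key
      have hsub : m + 1 - (m + 1) = 0 := by omega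
      rw [hsub] at key
      simp only [Nat.factorial_zero, Nat.cast_one, inv_one, mul_one] at key
      have hu1 : (u - 1) ≠ 0 := sub_ne_zero.mpr hu
      have heq : FE u (m+1) / ((m+1).factorial : ℂ)
          = (u - 1)⁻¹ * ∑ l ∈ range (m + 1), (FE u l / (l.factorial : ℂ)) * (((m + 1 - l).factorial : ℂ))⁻¹ := by
        have : ∑ l ∈ range (m + 1), (FE u l / (l.factorial : ℂ)) * (((m + 1 - l).factorial : ℂ))⁻¹
            = (u - 1) * (FE u (m+1) / ((m+1).factorial : ℂ)) := by
          linear_combination key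
        rw [this]; field_simp
      rw [heq]
      rw [norm_mul]
      have habs : ‖(u-1)⁻¹‖ = c := by rw [norm_inv]
      rw [habs]
      have hbound : ‖∑ l ∈ range (m + 1), (FE u l / (l.factorial : ℂ)) * (((m + 1 - l).factorial : ℂ))⁻¹‖
          ≤ ∑ l ∈ range (m + 1), K ^ m * ((1:ℝ)/2) ^ (m - l) := by
        refine le_trans (norm_sum_le _ _) (Finset.sum_le_sum fun l hl => ?_)
        have hlm : l < m + 1 := mem_range.mp hl
        rw [norm_mul]
        have h1 : ‖FE u l / (l.factorial : ℂ)‖ ≤ K ^ l := ih l (by omega)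
        have h2 : ‖(((m + 1 - l).factorial : ℂ))⁻¹‖ ≤ ((1:ℝ)/2) ^ (m - l) := by
          rw [norm_inv, Complex.norm_natCast]
          have : (2:ℝ) ^ (m - l) ≤ (((m - l) + 1).factorial : ℝ) := two_pow_le_fact (m - l)
          have hml : m + 1 - l = (m - l) + 1 := by omega
          rw [hml]
          rw [one_div, inv_pow]
          refine inv_anti₀ (by positivity) this
        calc ‖FE u l / (l.factorial : ℂ)‖ * ‖(((m + 1 - l).factorial : ℂ))⁻¹‖
            ≤ K ^ l * ((1:ℝ)/2) ^ (m - l) := by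
              refine mul_le_mul h1 h2 (by positivity) (by positivity)
          _ ≤ K ^ m * ((1:ℝ)/2) ^ (m - l) := by
              have : K ^ l ≤ K ^ m := pow_le_pow_right₀ (by linarith) (by omega)
              nlinarith [pow_nonneg (by norm_num : (0:ℝ) ≤ 1/2) (m - l)]
      have hgeom : ∑ l ∈ range (m + 1), K ^ m * ((1:ℝ)/2) ^ (m - l) ≤ K ^ m * 2 := by
        rw [← Finset.mul_sum]
        have : ∑ l ∈ range (m + 1), ((1:ℝ)/2) ^ (m - l) = ∑ l ∈ range (m + 1), ((1:ℝ)/2) ^ l := by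
          rw [← Finset.sum_range_reflect]
          refine Finset.sum_congr rfl fun l hl => ?_
          have hlm := mem_range.mp hl
          congr 1
          omega
        rw [this]
        have := sum_geometric_two_le (m + 1)
        have hKm : (0:ℝ) ≤ K ^ m := by positivity
        nlinarith
      calc c * ‖∑ l ∈ range (m + 1), (FE u l / (l.factorial : ℂ)) * (((m + 1 - l).factorial : ℂ))⁻¹‖
          ≤ c * (K ^ m * 2) := by
            refine mul_le_mul_of_nonneg_left (le_trans hbound hgeom) hcpos
        _ = (2 * c) * K ^ m := by ring
        _ ≤ K * K ^ m := by
            refine mul_le_mul_of_nonneg_right (le_max_right _ _) (by positivity)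
        _ = K ^ (m + 1) := by ring

theorem frobenius_euler_generating_function (u : ℂ) (hu : u ≠ 1) :
    ∃ r > (0 : ℝ), ∀ t : ℂ, ‖t‖ < r →
      HasSum (fun n : ℕ => FE u n * t ^ n / (n.factorial : ℂ))
        ((1 - u) / (Complex.exp t - u)) := by
  obtain ⟨K, hK1, hK⟩ := FE_bound u hu
  have hKpos : 0 < K := lt_of_lt_of_le one_pos hK1
  have h1u : 0 < ‖u - 1‖ := norm_pos_iff.mpr (sub_ne_zero.mpr hu)
  obtain ⟨δ, hδpos, hδ⟩ := Metric.continuousAt_iff.mp (Complex.continuous_exp.continuousAt (x := 0)) ‖u-1‖ h1u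
  refine ⟨min δ ((2*K)⁻¹), by positivity, ?_⟩
  intro t ht
  have ht1 : ‖t‖ < δ := lt_of_lt_of_le ht (min_le_left _ _)
  have ht2 : ‖t‖ < (2*K)⁻¹ := lt_of_lt_of_le ht (min_le_right _ _)
  have hratio : K * ‖t‖ < 1/2 := by
    have := mul_lt_mul_of_pos_left ht2 hKpos
    rw [mul_inv] at this
    calc K * ‖t‖ < K * (2⁻¹ * K⁻¹) := this
      _ = 1/2 := by field_simp
  -- exp t ≠ u
  have hne : Complex.exp t - u ≠ 0 := by
    intro h
    have h' : Complex.exp t = u := by linear_combination h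
    have := hδ (x := t) (by simpa [Complex.dist_eq] using ht1)
    rw [Complex.exp_zero, h', Complex.dist_eq] at this
    have : ‖u - 1‖ < ‖u - 1‖ := this
    exact lt_irrefl _ this
  -- summability
  set g : ℕ → ℂ := fun n => FE u n * t ^ n / (n.factorial : ℂ) with hg
  have hnormg : ∀ n, ‖g n‖ ≤ (K * ‖t‖) ^ n := by
    intro n
    have : g n = (FE u n / (n.factorial : ℂ)) * t ^ n := by rw [hg]; ring
    rw [this]
    rw [norm_mul, norm_pow]
    rw [mul_pow]
    exact mul_le_mul_of_nonneg_right (hK n) (by positivity)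
  have hsum_g : Summable fun n => ‖g n‖ := by
    refine Summable.of_nonneg_of_le (fun n => norm_nonneg _) hnormg ?_
    exact summable_geometric_of_lt_one (by positivity) (by linarith)
  have hsum_e : Summable fun n : ℕ => ‖t ^ n / (n.factorial : ℂ)‖ := by
    have := Real.summable_pow_div_factorial ‖t‖
    refine this.congr fun n => ?_
    rw [norm_div, norm_pow, Complex.norm_natCast]
  -- exp as tsum
  have hexp : Complex.exp t = ∑' n : ℕ, t ^ n / (n.factorial : ℂ) := by
    rw [Complex.exp_eq_exp_ℂ, NormedSpace.exp_eq_tsum_div]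
  set S : ℂ := ∑' n, g n with hS
  have hgS : HasSum g S := hsum_g.of_norm.hasSum
  -- Cauchy product
  have key := tsum_mul_tsum_eq_tsum_sum_range_of_summable_norm hsum_e hsum_g
  rw [← hexp, ← hS] at key
  -- compute inner sums
  have hinner : ∀ n : ℕ, ∑ k ∈ range (n + 1), (t ^ k / (k.factorial : ℂ)) * g (n - k)
      = u * g n + (if n = 0 then 1 - u else 0) := by
    intro n
    have step1 : ∑ k ∈ range (n + 1), (t ^ k / (k.factorial : ℂ)) * g (n - k)
        = t ^ n * ∑ k ∈ range (n + 1), (FE u (n-k) / ((n-k).factorial : ℂ)) * ((k.factorial : ℂ))⁻¹ := by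
      rw [Finset.mul_sum]
      refine Finset.sum_congr rfl fun k hk => ?_
      have hkn : k ≤ n := Nat.lt_succ_iff.mp (mem_range.mp hk)
      have hpow : t ^ k * t ^ (n - k) = t ^ n := by
        rw [← pow_add]; congr 1; omega
      rw [hg]
      simp only
      rw [← hpow]
      field_simp
    have step2 : ∑ k ∈ range (n + 1), (FE u (n-k) / ((n-k).factorial : ℂ)) * ((k.factorial : ℂ))⁻¹
        = ∑ l ∈ range (n + 1), (FE u l / (l.factorial : ℂ)) * (((n - l).factorial : ℂ))⁻¹ := by
      rw [← Finset.sum_range_reflect]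
      refine Finset.sum_congr rfl fun l hl => ?_
      have hln : l < n + 1 := mem_range.mp hl
      have h1 : n + 1 - 1 - l = n - l := by omega
      have h2 : n - (n - l) = l := by omega
      rw [h1, h2]
    rw [step1, step2]
    match n with
    | 0 => simp [FE, hg]
    | (m + 1) =>
      rw [FE_rec' u hu m]
      simp only [if_neg (Nat.succ_ne_zero m), add_zero, hg]
      field_simp
  rw [tsum_congr hinner] at key
  have hsplit : HasSum (fun n => u * g n + (if n = 0 then 1 - u else 0)) (u * S + (1 - u)) := by
    exact (hgS.mul_left u).add (hasSum_ite_eq 0 (1 - u))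
  rw [hsplit.tsum_eq] at key
  -- key : exp t * S = u * S + (1 - u)
  have hfinal : S = (1 - u) / (Complex.exp t - u) := by
    rw [eq_div_iff hne]
    linear_combination key
  rw [← hfinal]
  exact hgS
end

section
/- Let α, β ∈ ℂ with α ≠ 1, β ≠ 1 and α·β ≠ 1, let x ∈ ℂ, and let m, n ≥ 0 be integers. Then H_m(x|α)·H_n(x|β) = ((1−α)(1−β)/(1−αβ))·H_{m+n}(x|αβ) + (α(1−β)/(1−αβ))·∑_{r=0}^{m} C(m,r)·H_r(α)·H_{m+n−r}(x|αβ) + (β(1−α)/(1−αβ))·∑_{s=0}^{n} C(n,s)·H_s(β)·H_{m+n−s}(x|αβ). -/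
open Finset PowerSeries
open scoped Nat

/-- The Frobenius–Euler polynomials `H_n(x|u) = ∑_{l=0}^{n} C(n,l)·x^{n-l}·H_l(u)`. -/
noncomputable def FEpoly (u x : ℂ) (n : ℕ) : ℂ :=
  ∑ l ∈ Finset.range (n + 1), (n.choose l : ℂ) * x ^ (n - l) * FE u l

/-- R1: the defining recurrence in closed form. -/
lemma FE_sum (u : ℂ) (hu : u ≠ 1) (k : ℕ) :
    ∑ l ∈ range (k + 1), (k.choose l : ℂ) * FE u l
      = u * FE u k + (if k = 0 then 1 - u else 0) := by
  cases k with
  | zero => simp [FE]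
  | succ j =>
    have hdef : FE u (j + 1)
        = (u - 1)⁻¹ * ∑ l ∈ range (j + 1), ((j + 1).choose l : ℂ) * FE u l := by
      show FE u (j+1) = _
      rw [FE, Fin.sum_univ_eq_sum_range (fun l => ((j + 1).choose l : ℂ) * FE u l)]
    have hu' : u - 1 ≠ 0 := sub_ne_zero.mpr hu
    have h1 : ∑ l ∈ range (j + 1), ((j + 1).choose l : ℂ) * FE u l
        = (u - 1) * FE u (j + 1) := by
      rw [hdef]; field_simp
    rw [Finset.sum_range_succ, h1]
    simp [FE]
    ring

/-- FEpoly with the summation reflected. -/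
lemma FEpoly_reflect (u x : ℂ) (k : ℕ) :
    FEpoly u x k = ∑ l ∈ range (k + 1), (k.choose l : ℂ) * x ^ l * FE u (k - l) := by
  unfold FEpoly
  rw [← Finset.sum_range_reflect]
  apply Finset.sum_congr rfl
  intro l hl
  rw [Finset.mem_range] at hl
  have hlk : l ≤ k := Nat.lt_succ_iff.mp hl
  have h1 : k + 1 - 1 - l = k - l := by omega
  have h2 : k - (k - l) = l := by omega
  rw [h1, h2, Nat.choose_symm hlk]


/-- Regroup a rectangular binomial-weighted sum along diagonals (Vandermonde). -/
lemma rect_to_choose (m n : ℕ) (f : ℕ → ℂ) :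
    ∑ i ∈ range (m + 1), ∑ j ∈ range (n + 1),
        (m.choose i : ℂ) * (n.choose j : ℂ) * f (i + j)
      = ∑ k ∈ range (m + n + 1), ((m + n).choose k : ℂ) * f k := by
  classical
  have hrhs : ∀ k, ((m + n).choose k : ℂ) * f k
      = ∑ p ∈ antidiagonal k, (m.choose p.1 : ℂ) * (n.choose p.2 : ℂ) * f (p.1 + p.2) := by
    intro k
    rw [Nat.add_choose_eq]
    push_cast
    rw [Finset.sum_mul]
    apply Finset.sum_congr rfl
    intro p hp
    rw [Finset.HasAntidiagonal.mem_antidiagonal] at hp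
    rw [hp]
  simp_rw [hrhs]
  rw [← Finset.sum_biUnion]
  · -- now both are sums over sets of pairs
    rw [← Finset.sum_product']
    apply Finset.sum_subset
    · intro p hp
      rw [Finset.mem_product, Finset.mem_range, Finset.mem_range] at hp
      rw [Finset.mem_biUnion]
      exact ⟨p.1 + p.2, Finset.mem_range.mpr (by omega), Finset.HasAntidiagonal.mem_antidiagonal.mpr rfl⟩
    · intro p hp hnp
      rw [Finset.mem_product, Finset.mem_range, Finset.mem_range] at hnp
      push_neg at hnp
      by_cases h1 : p.1 < m + 1
      · have : n < p.2 := by have := hnp h1; omega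
        rw [Nat.choose_eq_zero_of_lt this]
        push_cast; ring
      · have : m < p.1 := by omega
        rw [Nat.choose_eq_zero_of_lt this]
        push_cast; ring
  · intro a _ b _ hab
    apply Finset.disjoint_left.mpr
    intro p hpa hpb
    rw [Finset.HasAntidiagonal.mem_antidiagonal] at hpa hpb
    exact hab (hpa ▸ hpb)

lemma fact_ne (k : ℕ) : ((k ! : ℂ)) ≠ 0 := Nat.cast_ne_zero.mpr (Nat.factorial_ne_zero k)

/-- Convert an antidiagonal sum of exponential coefficients into a binomial sum. -/
lemma conv_coeff (k : ℕ) (f g : ℕ → ℂ) :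
    ∑ p ∈ antidiagonal k, (f p.1 / p.1 !) * (g p.2 / p.2 !)
      = (∑ r ∈ range (k + 1), (k.choose r : ℂ) * f r * g (k - r)) / k ! := by
  rw [Finset.Nat.sum_antidiagonal_eq_sum_range_succ_mk, Finset.sum_div]
  apply Finset.sum_congr rfl
  intro r hr
  rw [Finset.mem_range] at hr
  have hrk : r ≤ k := Nat.lt_succ_iff.mp hr
  have h1 := fact_ne r
  have h2 := fact_ne (k - r)
  have h3 := fact_ne k
  rw [Nat.cast_choose ℂ hrk]
  field_simp

/-- Double-antidiagonal convolution of exponential coefficients of diagonal functions. -/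
lemma conv2 (m n : ℕ) (f g : ℕ → ℂ) :
    ∑ p ∈ antidiagonal m, ∑ q ∈ antidiagonal n,
        (f (p.1 + q.1) / (p.1 ! * q.1 !)) * (g (p.2 + q.2) / (p.2 ! * q.2 !))
      = (∑ k ∈ range (m + n + 1), ((m + n).choose k : ℂ) * f k * g (m + n - k))
          / (m ! * n !) := by
  rw [Finset.Nat.sum_antidiagonal_eq_sum_range_succ_mk]
  simp_rw [Finset.Nat.sum_antidiagonal_eq_sum_range_succ_mk]
  have key : ∑ i ∈ range (m + 1), ∑ j ∈ range (n + 1),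
      (f (i + j) / (i ! * j !)) * (g ((m - i) + (n - j)) / ((m - i)! * (n - j)!))
      = ∑ i ∈ range (m + 1), ∑ j ∈ range (n + 1),
      ((m.choose i : ℂ) * (n.choose j : ℂ) * (f (i + j) * g (m + n - (i + j)))) / (m ! * n !) := by
    apply Finset.sum_congr rfl; intro i hi
    apply Finset.sum_congr rfl; intro j hj
    rw [Finset.mem_range] at hi hj
    have him : i ≤ m := Nat.lt_succ_iff.mp hi
    have hjn : j ≤ n := Nat.lt_succ_iff.mp hj
    have : (m - i) + (n - j) = m + n - (i + j) := by omega
    have h1 := fact_ne i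
    have h2 := fact_ne j
    have h3 := fact_ne (m - i)
    have h4 := fact_ne (n - j)
    have h5 := fact_ne m
    have h6 := fact_ne n
    rw [this, Nat.cast_choose ℂ him, Nat.cast_choose ℂ hjn]
    field_simp
  rw [key]
  simp_rw [div_eq_mul_inv, ← Finset.sum_mul]
  congr 1
  rw [rect_to_choose m n (fun k => f k * g (m + n - k))]
  simp_rw [mul_assoc]


/-- Reflected version of R1. -/
lemma FE_sum_reflect (u : ℂ) (hu : u ≠ 1) (k : ℕ) :
    ∑ r ∈ range (k + 1), (k.choose r : ℂ) * FE u (k - r)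
      = u * FE u k + (if k = 0 then 1 - u else 0) := by
  rw [← FE_sum u hu k, ← Finset.sum_range_reflect]
  apply Finset.sum_congr rfl
  intro r hr
  rw [Finset.mem_range] at hr
  have hrk : r ≤ k := Nat.lt_succ_iff.mp hr
  have h1 : k + 1 - 1 - r = k - r := by omega
  have h2 : k - (k - r) = r := by omega
  rw [h1, Nat.choose_symm hrk, h2]

noncomputable def Ser (y : ℂ) : PowerSeries ℂ := PowerSeries.mk fun i => y ^ i / i !
noncomputable def SerH (u : ℂ) : PowerSeries ℂ := PowerSeries.mk fun i => FE u i / i !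

abbrev S2R := PowerSeries (PowerSeries ℂ)

noncomputable def mo : PowerSeries ℂ →+* S2R := PowerSeries.map (PowerSeries.C (R := ℂ))
noncomputable def cS (c : ℂ) : S2R := PowerSeries.C (R := PowerSeries ℂ) (PowerSeries.C (R := ℂ) c)
noncomputable def E2 (y : ℂ) : S2R :=
  PowerSeries.mk fun i => PowerSeries.mk fun j => y ^ (i + j) / (i ! * j !)
noncomputable def GH2 (u : ℂ) : S2R :=
  PowerSeries.mk fun i => PowerSeries.mk fun j => FE u (i + j) / (i ! * j !)
noncomputable def GC (u x : ℂ) : S2R :=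
  PowerSeries.mk fun i => PowerSeries.mk fun j => FEpoly u x (i + j) / (i ! * j !)

lemma coeff2_mul (F G : S2R) (m n : ℕ) :
    coeff (R := ℂ) n (coeff (R := PowerSeries ℂ) m (F * G))
      = ∑ p ∈ antidiagonal m, ∑ q ∈ antidiagonal n,
          coeff (R := ℂ) q.1 (coeff (R := PowerSeries ℂ) p.1 F) * coeff (R := ℂ) q.2 (coeff (R := PowerSeries ℂ) p.2 G) := by
  rw [coeff_mul, map_sum]
  exact Finset.sum_congr rfl fun p _ => coeff_mul n _ _

/-- S1: series form of the FE recurrence. -/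
lemma S1 (u : ℂ) (hu : u ≠ 1) :
    (Ser 1 - PowerSeries.C (R := ℂ) u) * SerH u = PowerSeries.C (R := ℂ) (1 - u) := by
  ext k
  rw [sub_mul, map_sub, PowerSeries.coeff_C_mul]
  have h1 : coeff (R := ℂ) k (Ser 1 * SerH u)
      = (∑ r ∈ range (k + 1), (k.choose r : ℂ) * (1:ℂ) ^ r * FE u (k - r)) / k ! := by
    rw [coeff_mul]
    simp only [Ser, SerH, coeff_mk]
    exact conv_coeff k (fun i => (1:ℂ) ^ i) (FE u)
  simp only [one_pow, mul_one] at h1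
  rw [h1, SerH, coeff_mk, FE_sum_reflect u hu k, PowerSeries.coeff_C]
  rcases k with _ | j
  · simp
  · simp [Nat.factorial_ne_zero]
    ring

/-- S2: the two-variable exponential is the product of one-variable ones. -/
lemma S2 (y : ℂ) : mo (Ser y) * PowerSeries.C (R := PowerSeries ℂ) (Ser y) = E2 y := by
  ext i : 1
  rw [PowerSeries.coeff_mul_C, mo, PowerSeries.coeff_map, Ser, coeff_mk]
  ext j
  rw [PowerSeries.coeff_C_mul]
  simp only [E2, coeff_mk]
  rw [pow_add, div_mul_div_comm]


/-- S3: two-variable series form of the FE recurrence. -/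
lemma S3 (u : ℂ) (hu : u ≠ 1) : (E2 1 - cS u) * GH2 u = cS (1 - u) := by
  ext m : 1
  ext n
  rw [sub_mul, map_sub, map_sub]
  have h1 : coeff (R := ℂ) n (coeff (R := PowerSeries ℂ) m (E2 1 * GH2 u))
      = (∑ k ∈ range (m + n + 1), ((m + n).choose k : ℂ) * (1:ℂ) ^ k * FE u (m + n - k))
          / (m ! * n !) := by
    rw [coeff2_mul]
    simp only [E2, GH2, coeff_mk]
    exact conv2 m n (fun i => (1:ℂ) ^ i) (FE u)
  simp only [one_pow, mul_one] at h1
  have h2 : coeff (R := ℂ) n (coeff (R := PowerSeries ℂ) m (cS u * GH2 u))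
      = u * (FE u (m + n) / (m ! * n !)) := by
    rw [cS, PowerSeries.coeff_C_mul, PowerSeries.coeff_C_mul]
    simp only [GH2, coeff_mk]
  have h3 : ∀ c : ℂ, coeff (R := ℂ) n (coeff (R := PowerSeries ℂ) m (cS c))
      = if m = 0 ∧ n = 0 then c else 0 := by
    intro c
    rw [cS, PowerSeries.coeff_C, apply_ite (coeff (R := ℂ) n), map_zero, PowerSeries.coeff_C]
    by_cases hm : m = 0 <;> by_cases hn : n = 0 <;> simp [hm, hn]
  rw [h1, h2, h3, FE_sum_reflect u hu (m + n)]
  rcases m with _ | m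
  · rcases n with _ | n
    · simp
    · simp [Nat.factorial_ne_zero]; ring
  · have : ¬ (m + 1 + n = 0) := by omega
    simp [this]
    ring

/-- S4: the two-variable FEpoly series factors. -/
lemma S4 (u x : ℂ) : E2 x * GH2 u = GC u x := by
  ext m : 1
  ext n
  have h1 : coeff (R := ℂ) n (coeff (R := PowerSeries ℂ) m (E2 x * GH2 u))
      = (∑ k ∈ range (m + n + 1), ((m + n).choose k : ℂ) * x ^ k * FE u (m + n - k))
          / (m ! * n !) := by
    rw [coeff2_mul]
    simp only [E2, GH2, coeff_mk]
    exact conv2 m n (fun i => x ^ i) (FE u)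
  rw [h1, ← FEpoly_reflect]
  simp only [GC, coeff_mk]


lemma mo_C (c : ℂ) : mo (PowerSeries.C (R := ℂ) c) = cS c := by
  rw [mo, PowerSeries.map_C]; rfl

lemma cS_mul (a b : ℂ) : cS (a * b) = cS a * cS b := by simp [cS, map_mul]

lemma cS_one_sub (c : ℂ) : cS (1 - c) = 1 - cS c := by simp [cS, map_sub, map_one]

lemma coeff2_cS_mul (c : ℂ) (F : S2R) (m n : ℕ) :
    coeff (R := ℂ) n (coeff (R := PowerSeries ℂ) m (cS c * F))
      = c * coeff (R := ℂ) n (coeff (R := PowerSeries ℂ) m F) := by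
  rw [cS, PowerSeries.coeff_C_mul, PowerSeries.coeff_C_mul]

/-- coefficient of the one-variable product `e^{xt}·(GF of FE)`. -/
lemma coeff_Ser_SerH (u x : ℂ) (k : ℕ) :
    coeff (R := ℂ) k (Ser x * SerH u) = FEpoly u x k / k ! := by
  rw [coeff_mul]
  simp only [Ser, SerH, coeff_mk]
  rw [conv_coeff k (fun i => x ^ i) (FE u), ← FEpoly_reflect]

section main
variable (α β x : ℂ)

/-- The main series identity. -/
lemma main_series (hα : α ≠ 1) (hβ : β ≠ 1) (hαβ : α * β ≠ 1) :
    cS (1 - α * β) * (mo (Ser x * SerH α) * PowerSeries.C (R := PowerSeries ℂ) (Ser x * SerH β))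
      = cS ((1 - α) * (1 - β)) * GC (α * β) x
        + cS (α * (1 - β)) * (mo (SerH α) * GC (α * β) x)
        + cS (β * (1 - α)) * (PowerSeries.C (R := PowerSeries ℂ) (SerH β) * GC (α * β) x) := by
  have h1a : (1 : ℂ) - α ≠ 0 := sub_ne_zero.mpr (Ne.symm hα)
  have h1b : (1 : ℂ) - β ≠ 0 := sub_ne_zero.mpr (Ne.symm hβ)
  have h1ab : (1 : ℂ) - α * β ≠ 0 := sub_ne_zero.mpr (Ne.symm hαβ)
  have hP : (mo (Ser 1) - cS α) * mo (SerH α) = 1 - cS α := by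
    have h := congrArg mo (S1 α hα)
    rw [map_mul, map_sub, mo_C, mo_C] at h
    rw [h, cS_one_sub]
  have hQ : (PowerSeries.C (R := PowerSeries ℂ) (Ser 1) - cS β)
      * PowerSeries.C (R := PowerSeries ℂ) (SerH β) = 1 - cS β := by
    have h := congrArg (PowerSeries.C (R := PowerSeries ℂ)) (S1 β hβ)
    rw [map_mul, map_sub] at h
    have h2 : cS (1 - β) = PowerSeries.C (R := PowerSeries ℂ) (PowerSeries.C (R := ℂ) (1 - β)) := rfl
    have h3 : cS β = PowerSeries.C (R := PowerSeries ℂ) (PowerSeries.C (R := ℂ) β) := rfl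
    rw [h3, h, ← h2, cS_one_sub, h3]
  have hR : (E2 1 - cS α * cS β) * GH2 (α * β) = 1 - cS α * cS β := by
    have h := S3 (α * β) hαβ
    rw [cS_mul] at h
    rw [h, cS_one_sub, cS_mul]
  have hK : E2 1 - cS α * cS β
      = (mo (Ser 1) - cS α) * (PowerSeries.C (R := PowerSeries ℂ) (Ser 1) - cS β)
        + cS α * (PowerSeries.C (R := PowerSeries ℂ) (Ser 1) - cS β)
        + cS β * (mo (Ser 1) - cS α) := by
    linear_combination -(S2 1)
  have hconst : ∀ F : PowerSeries ℂ, PowerSeries.constantCoeff (R := PowerSeries ℂ) (mo F)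
      = PowerSeries.C (R := ℂ) (PowerSeries.constantCoeff (R := ℂ) F) := by
    intro F
    rw [← PowerSeries.coeff_zero_eq_constantCoeff_apply, mo, PowerSeries.coeff_map,
      PowerSeries.coeff_zero_eq_constantCoeff_apply]
  -- the cancellation factor
  have hW : (mo (Ser 1) - cS α) * ((PowerSeries.C (R := PowerSeries ℂ) (Ser 1) - cS β)
      * (E2 1 - cS α * cS β)) ≠ 0 := by
    intro h0
    have h4 := congrArg (fun F => PowerSeries.constantCoeff (R := ℂ)
      (PowerSeries.constantCoeff (R := PowerSeries ℂ) F)) h0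
    simp only [map_mul, map_sub, map_zero, hconst, cS, E2, Ser,
      PowerSeries.constantCoeff_C, PowerSeries.constantCoeff_mk] at h4
    norm_num [Nat.factorial] at h4
    rcases h4 with h | h | h
    · exact h1a (by linear_combination h)
    · exact h1b (by linear_combination h)
    · exact h1ab (by linear_combination h)
  apply mul_right_cancel₀ hW
  rw [← S4 (α * β) x, map_mul, map_mul,
    cS_one_sub (α * β), cS_mul α β]
  have e1 : cS ((1 - α) * (1 - β)) = (1 - cS α) * (1 - cS β) := by
    rw [cS_mul, cS_one_sub, cS_one_sub]
  have e2 : cS (α * (1 - β)) = cS α * (1 - cS β) := by rw [cS_mul, cS_one_sub]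
  have e3 : cS (β * (1 - α)) = cS β * (1 - cS α) := by rw [cS_mul, cS_one_sub]
  rw [e1, e2, e3]
  linear_combination
    ((1 - cS α * cS β) * (E2 1 - cS α * cS β)
        * (PowerSeries.C (R := PowerSeries ℂ) (Ser 1) - cS β)
        * PowerSeries.C (R := PowerSeries ℂ) (SerH β) * mo (Ser x)
        * PowerSeries.C (R := PowerSeries ℂ) (Ser x)
      - (1 - cS α * cS β) * cS α * (1 - cS β) * E2 x
        * (PowerSeries.C (R := PowerSeries ℂ) (Ser 1) - cS β)) * hP
    + ((1 - cS α * cS β) * (E2 1 - cS α * cS β) * (1 - cS α) * mo (Ser x)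
        * PowerSeries.C (R := PowerSeries ℂ) (Ser x)
      - (1 - cS α * cS β) * cS β * (1 - cS α) * E2 x * (mo (Ser 1) - cS α)) * hQ
    + ((1 - cS α * cS β) * (E2 1 - cS α * cS β) * (1 - cS α) * (1 - cS β)) * (S2 x)
    + ((1 - cS α * cS β) * (1 - cS α) * (1 - cS β) * E2 x) * hK
    - (E2 x * (mo (Ser 1) - cS α) * (PowerSeries.C (R := PowerSeries ℂ) (Ser 1) - cS β)
        * ((1 - cS α) * (1 - cS β) + cS α * (1 - cS β) * mo (SerH α)
          + cS β * (1 - cS α) * PowerSeries.C (R := PowerSeries ℂ) (SerH β))) * hR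

end main

lemma coeff2_mo_C (F G : PowerSeries ℂ) (m n : ℕ) :
    coeff (R := ℂ) n (coeff (R := PowerSeries ℂ) m (mo F * PowerSeries.C (R := PowerSeries ℂ) G))
      = coeff (R := ℂ) m F * coeff (R := ℂ) n G := by
  rw [PowerSeries.coeff_mul_C, mo, PowerSeries.coeff_map, PowerSeries.coeff_C_mul]

lemma coeff2_D_GC (u' u x : ℂ) (m n : ℕ) :
    coeff (R := ℂ) n (coeff (R := PowerSeries ℂ) m (mo (SerH u') * GC u x))
      = (∑ r ∈ range (m + 1), (m.choose r : ℂ) * FE u' r * FEpoly u x (m + n - r))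
          / (m ! * n !) := by
  rw [PowerSeries.coeff_mul, map_sum]
  have step : ∀ p ∈ antidiagonal m,
      coeff (R := ℂ) n (coeff (R := PowerSeries ℂ) p.1 (mo (SerH u')) * coeff (R := PowerSeries ℂ) p.2 (GC u x))
        = (FE u' p.1 / p.1 !) * ((FEpoly u x (p.2 + n) / n !) / p.2 !) := by
    intro p _
    rw [mo, PowerSeries.coeff_map, SerH, coeff_mk, GC, coeff_mk, PowerSeries.coeff_C_mul,
      coeff_mk, div_div, mul_comm ((n ! : ℂ)) _]
  rw [Finset.sum_congr rfl step, conv_coeff m (FE u') (fun j => FEpoly u x (j + n) / n !)]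
  have e : ∀ r ∈ range (m + 1),
      (m.choose r : ℂ) * FE u' r * (FEpoly u x ((m - r) + n) / n !)
        = ((m.choose r : ℂ) * FE u' r * FEpoly u x (m + n - r)) / n ! := by
    intro r hr
    rw [Finset.mem_range] at hr
    have h : (m - r) + n = m + n - r := by omega
    rw [h, mul_div_assoc]
  rw [Finset.sum_congr rfl e, ← Finset.sum_div, div_div, mul_comm ((n ! : ℂ)) _]

lemma coeff2_E_GC (u' u x : ℂ) (m n : ℕ) :
    coeff (R := ℂ) n (coeff (R := PowerSeries ℂ) m (PowerSeries.C (R := PowerSeries ℂ) (SerH u') * GC u x))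
      = (∑ s ∈ range (n + 1), (n.choose s : ℂ) * FE u' s * FEpoly u x (m + n - s))
          / (m ! * n !) := by
  rw [PowerSeries.coeff_C_mul, PowerSeries.coeff_mul]
  have step : ∀ q ∈ antidiagonal n,
      coeff (R := ℂ) q.1 (SerH u') * coeff (R := ℂ) q.2 (coeff (R := PowerSeries ℂ) m (GC u x))
        = (FE u' q.1 / q.1 !) * ((FEpoly u x (m + q.2) / m !) / q.2 !) := by
    intro q _
    rw [SerH, coeff_mk, GC, coeff_mk, coeff_mk, div_div]
  rw [Finset.sum_congr rfl step, conv_coeff n (FE u') (fun j => FEpoly u x (m + j) / m !)]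
  have e : ∀ s ∈ range (n + 1),
      (n.choose s : ℂ) * FE u' s * (FEpoly u x (m + (n - s)) / m !)
        = ((n.choose s : ℂ) * FE u' s * FEpoly u x (m + n - s)) / m ! := by
    intro s hs
    rw [Finset.mem_range] at hs
    have h : m + (n - s) = m + n - s := by omega
    rw [h, mul_div_assoc]
  rw [Finset.sum_congr rfl e, ← Finset.sum_div, div_div]

theorem carlitz_product_formula (α β : ℂ) (hα : α ≠ 1) (hβ : β ≠ 1) (hαβ : α * β ≠ 1)
    (x : ℂ) (m n : ℕ) :
    FEpoly α x m * FEpoly β x n =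
      ((1 - α) * (1 - β) / (1 - α * β)) * FEpoly (α * β) x (m + n) +
        (α * (1 - β) / (1 - α * β)) *
          ∑ r ∈ Finset.range (m + 1), (m.choose r : ℂ) * FE α r * FEpoly (α * β) x (m + n - r) +
        (β * (1 - α) / (1 - α * β)) *
          ∑ s ∈ Finset.range (n + 1), (n.choose s : ℂ) * FE β s * FEpoly (α * β) x (m + n - s) := by
  have h1ab : (1 : ℂ) - α * β ≠ 0 := sub_ne_zero.mpr (Ne.symm hαβ)
  have hm := fact_ne m
  have hn := fact_ne n
  have hM := main_series α β x hα hβ hαβ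
  have hcoe := congrArg (fun F => coeff (R := ℂ) n (coeff (R := PowerSeries ℂ) m F)) hM
  simp only [map_add] at hcoe
  rw [coeff2_cS_mul, coeff2_cS_mul, coeff2_cS_mul, coeff2_cS_mul, coeff2_mo_C,
    coeff_Ser_SerH, coeff_Ser_SerH, coeff2_D_GC, coeff2_E_GC] at hcoe
  simp only [GC, coeff_mk] at hcoe
  field_simp [hm, hn] at hcoe
  field_simp [h1ab]
  linear_combination hcoe
end
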